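/- The function F(z) = C₉ z^{C₂}(z−1)^{−C₂} / (C₈C₉z^{C₉} + ₂F₁(C₂, C₉; 1+C₉; 1/z)), with C₉ = 1−C₃, solves the ODE dF/dz = −F·[(F + C₃ − 1)(1−z) + C₂] / (z(z−1)). -/

import Mathlib

open Filter

private lemma stmt16_sum_aux (c : ℕ → ℝ) (K : ℝ) (hK : 1 ≤ K)
    (hrat : ∀ᶠ n : ℕ in atTop, ((n : ℝ) + 1) * |c (n + 1)| ≤ ((n : ℝ) + K) * |c n|)
    (r : ℝ) (hr0 : 0 < r) (hr1 : r < 1) :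
    Summable (fun n : ℕ => ((n : ℝ) + 1) * |c n| * r ^ n) := by
  set r' : ℝ := (1 + r) / 2 with hr'def
  have hr'1 : r' < 1 := by rw [hr'def]; linarith
  have hrr' : r < r' := by rw [hr'def]; linarith
  have hr'pos : 0 < r' := by rw [hr'def]; linarith
  apply summable_of_ratio_norm_eventually_le hr'1
  obtain ⟨N₀, hN₀⟩ := eventually_atTop.1 hrat
  rw [eventually_atTop]
  refine ⟨max N₀ (max 1 ⌈(3 * K + 2) / (r' - r)⌉₊), fun n hn => ?_⟩
  have hn0 : N₀ ≤ n := le_trans (le_max_left _ _) hn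
  have hn1 : 1 ≤ n := le_trans (le_trans (le_max_left _ _) (le_max_right _ _)) hn
  have hn1' : (1 : ℝ) ≤ n := by exact_mod_cast hn1
  have hn2 : (3 * K + 2) / (r' - r) ≤ (n : ℝ) := by
    refine le_trans (Nat.le_ceil _) ?_
    exact_mod_cast le_trans (le_trans (le_max_right _ _) (le_max_right _ _)) hn
  have hn2' : 3 * K + 2 ≤ (r' - r) * n := by
    rw [div_le_iff₀ (by linarith)] at hn2; linarith
  have h1 := hN₀ n hn0
  have key : r * (((n : ℝ) + 2) * ((n : ℝ) + K)) ≤ r' * ((n : ℝ) + 1) ^ 2 := by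
    nlinarith [mul_nonneg (by nlinarith : (0:ℝ) ≤ (r' - r) * n - (3 * K + 2)) (by positivity : (0:ℝ) ≤ (n:ℝ)),
      mul_nonneg (by linarith : (0:ℝ) ≤ 1 - r) (by positivity : (0:ℝ) ≤ (K + 2) * (n:ℝ)),
      mul_nonneg (by linarith : (0:ℝ) ≤ 1 - r) (by linarith : (0:ℝ) ≤ K),
      mul_nonneg (by linarith : (0:ℝ) ≤ K) (by linarith : (0:ℝ) ≤ (n:ℝ) - 1)]
  have hpos : (0:ℝ) < (n : ℝ) + 1 := by positivity
  have habs : ∀ x : ℝ, 0 ≤ x → ‖x‖ = x := fun x hx => by rw [Real.norm_eq_abs, abs_of_nonneg hx]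
  rw [habs _ (by positivity), habs _ (by positivity)]
  rw [← mul_le_mul_iff_right₀ hpos]
  push_cast
  calc ((n:ℝ) + 1) * ((((n:ℝ) + 1) + 1) * |c (n + 1)| * r ^ (n + 1))
      = (((n:ℝ) + 1) * |c (n + 1)|) * (((n:ℝ) + 2) * (r * r ^ n)) := by ring
    _ ≤ (((n:ℝ) + K) * |c n|) * (((n:ℝ) + 2) * (r * r ^ n)) := by
        apply mul_le_mul_of_nonneg_right h1 (by positivity)
    _ = (r * (((n:ℝ) + 2) * ((n:ℝ) + K))) * (|c n| * r ^ n) := by ring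
    _ ≤ (r' * ((n:ℝ) + 1) ^ 2) * (|c n| * r ^ n) := mul_le_mul_of_nonneg_right key (by positivity)
    _ = ((n:ℝ) + 1) * (r' * (((n:ℝ) + 1) * |c n| * r ^ n)) := by ring

private lemma stmt16_powser (c : ℕ → ℝ) (r : ℝ) (hr0 : 0 < r) (hr1 : r < 1)
    (hs : Summable fun n : ℕ => ((n : ℝ) + 1) * |c n| * r ^ n)
    (w : ℝ) (hw : |w| < r) :
    HasDerivAt (fun x : ℝ => ∑' n : ℕ, c n * x ^ n)
      (∑' n : ℕ, c n * ((n : ℝ) * w ^ (n - 1))) w ∧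
    (∑' n : ℕ, c n * ((n : ℝ) * w ^ (n - 1)))
      = ∑' n : ℕ, ((n : ℝ) + 1) * c (n + 1) * w ^ n := by
  have hu : Summable (fun n : ℕ => (n : ℝ) * |c n| * r ^ (n - 1)) := by
    rw [← summable_nat_add_iff 1]
    apply Summable.of_nonneg_of_le (fun n => by positivity) (fun n => ?_)
      (((summable_nat_add_iff 1).2 hs).mul_left r⁻¹)
    simp only [Nat.add_sub_cancel]
    have hr' : r ≠ 0 := hr0.ne'
    have : r⁻¹ * ((((n + 1 : ℕ) : ℝ) + 1) * |c (n + 1)| * r ^ (n + 1))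
        = (((n + 1 : ℕ) : ℝ) + 1) * |c (n + 1)| * r ^ n := by
      rw [pow_succ]; field_simp
    rw [this]
    have : (0:ℝ) ≤ |c (n+1)| * r ^ n := by positivity
    push_cast
    nlinarith [this]
  have hbound : ∀ (n : ℕ) (y : ℝ), y ∈ Set.Ioo (-r) r →
      ‖c n * ((n : ℝ) * y ^ (n - 1))‖ ≤ (n : ℝ) * |c n| * r ^ (n - 1) := by
    intro n y hy
    have hyr : |y| ≤ r := le_of_lt (abs_lt.2 ⟨hy.1, hy.2⟩)
    rw [Real.norm_eq_abs, abs_mul, abs_mul, abs_pow, Nat.abs_cast]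
    calc |c n| * ((n : ℝ) * |y| ^ (n - 1)) ≤ |c n| * ((n : ℝ) * r ^ (n - 1)) := by
          apply mul_le_mul_of_nonneg_left _ (abs_nonneg _)
          apply mul_le_mul_of_nonneg_left _ (Nat.cast_nonneg n)
          exact pow_le_pow_left₀ (abs_nonneg _) hyr _
      _ = (n : ℝ) * |c n| * r ^ (n - 1) := by ring
  have hsum0 : Summable (fun n : ℕ => c n * (0:ℝ) ^ n) := by
    apply summable_of_ne_finset_zero (s := {0})
    intro n hn
    have : n ≠ 0 := by simpa using hn
    simp [zero_pow this]
  have hmem : w ∈ Set.Ioo (-r) r := ⟨neg_lt_of_abs_lt hw, lt_of_abs_lt hw⟩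
  have hmem0 : (0:ℝ) ∈ Set.Ioo (-r) r := ⟨by linarith, hr0⟩
  have hder := hasDerivAt_tsum_of_isPreconnected hu isOpen_Ioo
    ((convex_Ioo (-r) r).isPreconnected)
    (fun n y _ => HasDerivAt.const_mul (c n) (hasDerivAt_pow n y))
    hbound hmem0 hsum0 hmem
  have hsummable : Summable (fun n : ℕ => c n * ((n : ℝ) * w ^ (n - 1))) :=
    Summable.of_norm_bounded hu (fun n => hbound n w hmem)
  constructor
  · exact hder
  · rw [Summable.tsum_eq_zero_add hsummable]
    simp only [Nat.cast_zero, zero_mul, mul_zero, zero_add]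
    apply tsum_congr
    intro n
    rw [Nat.add_sub_cancel]
    push_cast
    ring

/-- The Gauss hypergeometric function `₂F₁(a,b;c;w)` as a power series
(with `(x)_n` the ascending Pochhammer symbol). -/
noncomputable def gaussHyp (a b c w : ℝ) : ℝ :=
  ∑' n : ℕ, ((ascPochhammer ℝ n).eval a * (ascPochhammer ℝ n).eval b
      / ((ascPochhammer ℝ n).eval c * (n.factorial : ℝ))) * w ^ n

set_option maxHeartbeats 1000000 in
/-- `F(z) = C₉ z^{C₂}(z-1)^{-C₂} / (C₈C₉z^{C₉} + ₂F₁(C₂,C₉;1+C₉;1/z))`,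
with `C₉ = 1 - C₃`, solves `F' = -F[(F + C₃ - 1)(1-z) + C₂]/(z(z-1))`. -/
theorem stmt16 (C2 C3 C8 C9 : ℝ) (hC9 : C9 = 1 - C3) (hC9ne : C9 ≠ 0)
    (hc : ∀ n : ℕ, 1 + C9 + (n : ℝ) ≠ 0)
    (z : ℝ) (hz : 1 < z)
    (hden : C8 * C9 * z ^ C9 + gaussHyp C2 C9 (1 + C9) (1 / z) ≠ 0) :
    letI Ffun : ℝ → ℝ := fun t =>
      C9 * t ^ C2 * (t - 1) ^ (-C2) / (C8 * C9 * t ^ C9 + gaussHyp C2 C9 (1 + C9) (1 / t))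
    HasDerivAt Ffun
      (-(Ffun z * ((Ffun z + C3 - 1) * (1 - z) + C2)) / (z * (z - 1))) z := by
  beta_reduce
  have hz0 : (0:ℝ) < z := lt_trans one_pos hz
  have hz1 : (0:ℝ) < z - 1 := by linarith
  set w₀ : ℝ := 1 / z with hw₀def
  have hw₀pos : 0 < w₀ := by positivity
  have hw₀lt : w₀ < 1 := by rw [hw₀def, div_lt_one hz0]; linarith
  set r : ℝ := (1 + w₀) / 2 with hrdef
  have hr0 : 0 < r := by rw [hrdef]; linarith
  have hr1 : r < 1 := by rw [hrdef]; linarith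
  have hw₀r : w₀ < r := by rw [hrdef]; linarith
  have hw₀abs : |w₀| < r := by rw [abs_of_pos hw₀pos]; exact hw₀r
  -- coefficients
  set a : ℕ → ℝ := fun n => (ascPochhammer ℝ n).eval C2 * (ascPochhammer ℝ n).eval C9 /
      ((ascPochhammer ℝ n).eval (1 + C9) * (n.factorial : ℝ)) with ha
  set b : ℕ → ℝ := fun n => (ascPochhammer ℝ n).eval C2 / (n.factorial : ℝ) with hb
  have hQ : ∀ n : ℕ, (ascPochhammer ℝ n).eval (1 + C9) ≠ 0 := by
    intro n; induction n with
    | zero => simp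
    | succ n ih =>
      rw [ascPochhammer_succ_eval]
      exact mul_ne_zero ih (hc n)
  have hfac : ∀ n : ℕ, ((n.factorial : ℝ)) ≠ 0 := fun n => Nat.cast_ne_zero.2 n.factorial_ne_zero
  have hb_rec : ∀ n : ℕ, b (n + 1) * ((n:ℝ) + 1) = b n * (C2 + n) := by
    intro n
    simp only [hb, ascPochhammer_succ_eval, Nat.factorial_succ]
    push_cast
    field_simp
  have ha_rec : ∀ n : ℕ, a (n + 1) * ((1 + C9 + (n:ℝ)) * ((n:ℝ) + 1))
      = a n * ((C2 + n) * (C9 + n)) := by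
    intro n
    simp only [ha, ascPochhammer_succ_eval, Nat.factorial_succ]
    push_cast
    field_simp [hQ n, hc n, hfac n]
  have hkey : ∀ n : ℕ, ((n:ℝ) + C9) * a n = C9 * b n := by
    intro n
    have h2 : (ascPochhammer ℝ (n + 1)).eval C9
        = C9 * (ascPochhammer ℝ n).eval (C9 + 1) := by
      rw [ascPochhammer_succ_left, Polynomial.eval_mul, Polynomial.eval_X,
        Polynomial.eval_comp, Polynomial.eval_add, Polynomial.eval_X, Polynomial.eval_one]
    rw [ascPochhammer_succ_eval, add_comm C9 1] at h2
    simp only [ha, hb]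
    rw [mul_div_assoc', mul_div_assoc', div_eq_div_iff (mul_ne_zero (hQ n) (hfac n)) (hfac n)]
    linear_combination (ascPochhammer ℝ n).eval C2 * (n.factorial : ℝ) * h2
  -- ratio bounds
  set K : ℝ := |C2| + 2 with hKdef
  have hK1 : (1:ℝ) ≤ K := by rw [hKdef]; have := abs_nonneg C2; linarith
  have hCbound : ∀ n : ℕ, |C2 + (n:ℝ)| ≤ (n:ℝ) + K := by
    intro n
    calc |C2 + (n:ℝ)| ≤ |C2| + |(n:ℝ)| := abs_add_le _ _
      _ = |C2| + (n:ℝ) := by rw [Nat.abs_cast]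
      _ ≤ (n:ℝ) + K := by rw [hKdef]; linarith
  have hbrat : ∀ᶠ n : ℕ in Filter.atTop, ((n:ℝ) + 1) * |b (n + 1)| ≤ ((n:ℝ) + K) * |b n| := by
    apply Filter.Eventually.of_forall
    intro n
    have h := hb_rec n
    have h1 : |b (n + 1)| * ((n:ℝ) + 1) = |b n| * |C2 + (n:ℝ)| := by
      rw [← abs_of_pos (show (0:ℝ) < (n:ℝ) + 1 by positivity), ← abs_mul, h, abs_mul]
    nlinarith [mul_le_mul_of_nonneg_left (hCbound n) (abs_nonneg (b n)), abs_nonneg (b (n+1))]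
  have harat : ∀ᶠ n : ℕ in Filter.atTop, ((n:ℝ) + 1) * |a (n + 1)| ≤ ((n:ℝ) + K) * |a n| := by
    rw [Filter.eventually_atTop]
    refine ⟨⌈|C9|⌉₊, fun n hn => ?_⟩
    have hC9n : (0:ℝ) ≤ C9 + n := by
      have h1 : |C9| ≤ (n:ℝ) := le_trans (Nat.le_ceil _) (Nat.cast_le.2 hn)
      have h2 := neg_abs_le C9
      linarith
    have hpos : (0:ℝ) < 1 + C9 + n := by linarith
    have habs : |a (n + 1)| * ((1 + C9 + (n:ℝ)) * ((n:ℝ) + 1))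
        = |a n| * (|C2 + (n:ℝ)| * (C9 + (n:ℝ))) := by
      rw [← abs_of_pos hpos, ← abs_of_pos (show (0:ℝ) < (n:ℝ) + 1 by positivity),
        ← abs_of_nonneg hC9n, ← abs_mul, ← abs_mul, ← abs_mul, ← abs_mul, ha_rec n]
    rw [← mul_le_mul_iff_left₀ hpos]
    nlinarith [habs, mul_le_mul_of_nonneg_left
        (mul_le_mul (hCbound n) (by linarith : C9 + (n:ℝ) ≤ 1 + C9 + n) hC9n
          (by positivity : (0:ℝ) ≤ (n:ℝ) + K)) (abs_nonneg (a n)),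
      abs_nonneg (a (n+1)), abs_nonneg (a n)]
  have hsa := stmt16_sum_aux a K hK1 harat r hr0 hr1
  have hsb := stmt16_sum_aux b K hK1 hbrat r hr0 hr1
  -- domination helper
  have hdom : ∀ (c : ℕ → ℝ), Summable (fun n : ℕ => ((n:ℝ) + 1) * |c n| * r ^ n) →
      ∀ (d : ℕ → ℝ) (M : ℝ), (∀ n : ℕ, |d n| ≤ M * (((n:ℝ) + 1) * |c n| * r ^ n)) →
      Summable d :=
    fun c hcs d M hd => Summable.of_norm_bounded (hcs.mul_left M) hd
  have hpowb : ∀ x : ℝ, |x| ≤ r → ∀ n : ℕ, |x| ^ n ≤ r ^ n :=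
    fun x hx n => pow_le_pow_left₀ (abs_nonneg _) hx n
  have hnK : ∀ n : ℕ, (n:ℝ) + K ≤ K * ((n:ℝ) + 1) := by
    intro n
    have h1 : (n:ℝ) ≤ K * n := le_mul_of_one_le_left (Nat.cast_nonneg n) hK1
    nlinarith
  -- summability instances
  have hSb1 : ∀ x : ℝ, |x| ≤ r → Summable (fun n : ℕ => b n * (C2 + (n:ℝ)) * x ^ n) := by
    intro x hx
    apply hdom b hsb _ K
    intro n
    rw [abs_mul, abs_mul, abs_pow]
    calc |b n| * |C2 + (n:ℝ)| * |x| ^ n ≤ |b n| * ((n:ℝ) + K) * r ^ n := by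
          apply mul_le_mul (mul_le_mul_of_nonneg_left (hCbound n) (abs_nonneg _)) (hpowb x hx n)
            (by positivity) (by positivity)
      _ ≤ |b n| * (K * ((n:ℝ) + 1)) * r ^ n :=
          mul_le_mul_of_nonneg_right
            (mul_le_mul_of_nonneg_left (hnK n) (abs_nonneg (b n))) (pow_nonneg hr0.le n)
      _ = K * (((n:ℝ) + 1) * |b n| * r ^ n) := by ring
  have hSmuln : ∀ (c : ℕ → ℝ), Summable (fun n : ℕ => ((n:ℝ) + 1) * |c n| * r ^ n) →
      ∀ x : ℝ, |x| ≤ r → Summable (fun n : ℕ => c n * (n:ℝ) * x ^ n) := by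
    intro c hcs x hx
    apply hdom c hcs _ 1
    intro n
    rw [one_mul, abs_mul, abs_mul, abs_pow, Nat.abs_cast]
    calc |c n| * (n:ℝ) * |x| ^ n ≤ |c n| * ((n:ℝ) + 1) * r ^ n := by
          apply mul_le_mul (mul_le_mul_of_nonneg_left (by linarith : (n:ℝ) ≤ (n:ℝ) + 1)
            (abs_nonneg (c n))) (hpowb x hx n) (by positivity) (by positivity)
      _ = ((n:ℝ) + 1) * |c n| * r ^ n := by ring
  have hSpl : ∀ (c : ℕ → ℝ), Summable (fun n : ℕ => ((n:ℝ) + 1) * |c n| * r ^ n) →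
      ∀ x : ℝ, |x| ≤ r → Summable (fun n : ℕ => c n * x ^ n) := by
    intro c hcs x hx
    apply hdom c hcs _ 1
    intro n
    rw [one_mul, abs_mul, abs_pow]
    calc |c n| * |x| ^ n ≤ |c n| * r ^ n := by
          apply mul_le_mul_of_nonneg_left (hpowb x hx n) (abs_nonneg _)
      _ = 1 * |c n| * r ^ n := by ring
      _ ≤ ((n:ℝ) + 1) * |c n| * r ^ n := by
          apply mul_le_mul_of_nonneg_right (mul_le_mul_of_nonneg_right
            (by linarith [Nat.cast_nonneg (α := ℝ) n] : (1:ℝ) ≤ (n:ℝ) + 1) (abs_nonneg (c n)))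
            (pow_nonneg hr0.le n)
  -- ODE for the binomial series
  have hODEb : ∀ x : ℝ, |x| < r →
      (1 - x) * (∑' n : ℕ, b n * ((n:ℝ) * x ^ (n - 1))) = C2 * ∑' n : ℕ, b n * x ^ n := by
    intro x hx
    have hshift := (stmt16_powser b r hr0 hr1 hsb x hx).2
    have hxd : (∑' n : ℕ, b n * ((n:ℝ) * x ^ (n - 1)))
        = ∑' n : ℕ, b n * (C2 + (n:ℝ)) * x ^ n := by
      rw [hshift]
      apply tsum_congr
      intro n
      rw [show ((n:ℝ) + 1) * b (n + 1) = b (n + 1) * ((n:ℝ) + 1) from mul_comm _ _, hb_rec n]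
    have hxmul : x * (∑' n : ℕ, b n * ((n:ℝ) * x ^ (n - 1)))
        = ∑' n : ℕ, b n * (n:ℝ) * x ^ n := by
      rw [← tsum_mul_left]
      apply tsum_congr
      intro n
      cases n with
      | zero => simp
      | succ m => rw [Nat.add_sub_cancel]; push_cast; ring
    have hexp : ∀ T : ℝ, (1 - x) * T = T - x * T := fun T => by ring
    rw [hexp, hxmul, hxd, ← Summable.tsum_sub (hSb1 x hx.le) (hSmuln b hsb x hx.le), ← tsum_mul_left]
    apply tsum_congr
    intro n
    ring
  -- value of the binomial series : fb w₀ = (1-w₀)^(-C2)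
  have hb0 : b 0 = 1 := by simp [hb]
  have hfb0 : (∑' n : ℕ, b n * (0:ℝ) ^ n) = 1 := by
    rw [tsum_eq_single 0 (fun n hn => by simp [zero_pow hn])]
    simpa using hb0
  have hphi : ∀ x ∈ Set.Icc (0:ℝ) w₀,
      HasDerivAt (fun y : ℝ => (∑' n : ℕ, b n * y ^ n) * (1 - y) ^ C2) 0 x := by
    intro x hx
    have hx1 : (0:ℝ) < 1 - x := by
      have := hx.2; linarith
    have hxr : |x| < r := by
      rw [abs_of_nonneg hx.1]; exact lt_of_le_of_lt hx.2 hw₀r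
    have h1 := (stmt16_powser b r hr0 hr1 hsb x hxr).1
    have hinner : HasDerivAt (fun y : ℝ => 1 - y) (-1) x := by
      simpa using (hasDerivAt_id x).const_sub 1
    have h2 : HasDerivAt (fun y : ℝ => (1 - y) ^ C2) (C2 * (1 - x) ^ (C2 - 1) * (-1)) x := by
      exact (Real.hasDerivAt_rpow_const (Or.inl hx1.ne')).comp x hinner
    have h3 := h1.mul h2
    refine h3.congr_deriv (Eq.symm ?_)
    have hsplit : (1 - x) ^ C2 = (1 - x) ^ (C2 - 1) * (1 - x) := by
      rw [show C2 = (C2 - 1) + 1 by ring, Real.rpow_add hx1, Real.rpow_one]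
      ring_nf
    have hode := hODEb x hxr
    rw [hsplit]
    linear_combination (-((1 - x) ^ (C2 - 1))) * hode
  have h1w : (0:ℝ) < 1 - w₀ := by linarith
  have hfbw : (∑' n : ℕ, b n * w₀ ^ n) = (1 - w₀) ^ (-C2) := by
    have hconst := constant_of_has_deriv_right_zero
      (f := fun y : ℝ => (∑' n : ℕ, b n * y ^ n) * (1 - y) ^ C2) (a := 0) (b := w₀)
      (fun x hx => ((hphi x hx).continuousAt).continuousWithinAt)
      (fun x hx => ((hphi x (Set.mem_Icc.2 ⟨hx.1, hx.2.le⟩)).hasDerivWithinAt))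
      w₀ (Set.mem_Icc.2 ⟨hw₀pos.le, le_refl _⟩)
    simp only [sub_zero, Real.rpow_natCast] at hconst
    rw [hfb0] at hconst
    have hC2pos : (0:ℝ) < (1 - w₀) ^ C2 := Real.rpow_pos_of_pos h1w C2
    have h1 : (∑' n : ℕ, b n * w₀ ^ n) * (1 - w₀) ^ C2 = 1 := by
      rw [hconst]
      norm_num
    rw [Real.rpow_neg h1w.le]
    exact eq_inv_of_mul_eq_one_left (by linear_combination h1)
  -- derivative of G and its ODE
  set g : ℝ := ∑' n : ℕ, a n * ((n:ℝ) * w₀ ^ (n - 1)) with hgdef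
  have hG : HasDerivAt (fun x : ℝ => ∑' n : ℕ, a n * x ^ n) g w₀ :=
    (stmt16_powser a r hr0 hr1 hsa w₀ hw₀abs).1
  have hODEa : w₀ * g + C9 * (∑' n : ℕ, a n * w₀ ^ n) = C9 * ∑' n : ℕ, b n * w₀ ^ n := by
    have h1 : w₀ * g = ∑' n : ℕ, a n * (n:ℝ) * w₀ ^ n := by
      rw [hgdef, ← tsum_mul_left]
      apply tsum_congr
      intro n
      cases n with
      | zero => simp
      | succ m => rw [Nat.add_sub_cancel]; push_cast; ring
    have h2 : C9 * (∑' n : ℕ, a n * w₀ ^ n) = ∑' n : ℕ, C9 * (a n * w₀ ^ n) :=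
      tsum_mul_left.symm
    rw [h1, h2, ← Summable.tsum_add (hSmuln a hsa w₀ hw₀abs.le)
      ((hSpl a hsa w₀ hw₀abs.le).mul_left C9), ← tsum_mul_left]
    apply tsum_congr
    intro n
    linear_combination w₀ ^ n * hkey n
  -- rpow algebra
  have hA1 : z ^ (C2 - 1) = z ^ C2 / z := by rw [Real.rpow_sub hz0, Real.rpow_one]
  have hP1 : z ^ (C9 - 1) = z ^ C9 / z := by rw [Real.rpow_sub hz0, Real.rpow_one]
  have hB1 : (z - 1) ^ (-C2 - 1) = (z - 1) ^ (-C2) / (z - 1) := by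
    rw [Real.rpow_sub hz1, Real.rpow_one]
  have hAB : (1 - w₀) ^ (-C2) = z ^ C2 * (z - 1) ^ (-C2) := by
    have h1 : 1 - w₀ = (z - 1) / z := by rw [hw₀def]; field_simp
    rw [h1, Real.div_rpow hz1.le hz0.le, Real.rpow_neg hz0.le, div_eq_mul_inv, inv_inv]
    ring
  have hgauss_eq : gaussHyp C2 C9 (1 + C9) w₀ = ∑' n : ℕ, a n * w₀ ^ n := by
    simp only [gaussHyp, ha]
  have hODEz : w₀ * g = C9 * (z ^ C2 * (z - 1) ^ (-C2)) - C9 * gaussHyp C2 C9 (1 + C9) w₀ := by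
    rw [hgauss_eq, ← hAB, ← hfbw]
    linarith [hODEa]
  -- derivatives of numerator and denominator
  have hGfun : (fun x : ℝ => gaussHyp C2 C9 (1 + C9) x) = fun x : ℝ => ∑' n : ℕ, a n * x ^ n := by
    funext x
    simp only [gaussHyp, ha]
  have hG' : HasDerivAt (fun x : ℝ => gaussHyp C2 C9 (1 + C9) x) g (1 / z) := by
    rw [hGfun, ← hw₀def]
    exact hG
  have hinv : HasDerivAt (fun t : ℝ => 1 / t) (-(1 / z ^ 2)) z := by
    simpa [one_div] using hasDerivAt_inv hz0.ne'
  have h4 : HasDerivAt (fun t : ℝ => gaussHyp C2 C9 (1 + C9) (1 / t)) (g * -(1 / z ^ 2)) z := by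
    have h5 := hG'.comp z hinv
    simpa [Function.comp_def] using h5
  have h1d : HasDerivAt (fun t : ℝ => t ^ C2) (C2 * z ^ (C2 - 1)) z :=
    Real.hasDerivAt_rpow_const (Or.inl hz0.ne')
  have h2sub : HasDerivAt (fun t : ℝ => t - 1) 1 z := (hasDerivAt_id z).sub_const 1
  have h2d : HasDerivAt (fun t : ℝ => (t - 1) ^ (-C2)) (-C2 * (z - 1) ^ (-C2 - 1) * 1) z := by
    have h6 := (Real.hasDerivAt_rpow_const (x := z - 1) (p := -C2) (Or.inl hz1.ne')).comp z h2sub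
    simpa [Function.comp_def] using h6
  have hN : HasDerivAt (fun t : ℝ => C9 * t ^ C2 * (t - 1) ^ (-C2))
      (C9 * (C2 * z ^ (C2 - 1)) * (z - 1) ^ (-C2)
        + C9 * z ^ C2 * (-C2 * (z - 1) ^ (-C2 - 1) * 1)) z :=
    (h1d.const_mul C9).mul h2d
  have h3d : HasDerivAt (fun t : ℝ => t ^ C9) (C9 * z ^ (C9 - 1)) z :=
    Real.hasDerivAt_rpow_const (Or.inl hz0.ne')
  have hD : HasDerivAt (fun t : ℝ => C8 * C9 * t ^ C9 + gaussHyp C2 C9 (1 + C9) (1 / t))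
      (C8 * C9 * (C9 * z ^ (C9 - 1)) + g * -(1 / z ^ 2)) z :=
    (h3d.const_mul (C8 * C9)).add h4
  have hF : HasDerivAt
      (fun t : ℝ => C9 * t ^ C2 * (t - 1) ^ (-C2)
        / (C8 * C9 * t ^ C9 + gaussHyp C2 C9 (1 + C9) (1 / t)))
      (((C9 * (C2 * z ^ (C2 - 1)) * (z - 1) ^ (-C2)
          + C9 * z ^ C2 * (-C2 * (z - 1) ^ (-C2 - 1) * 1))
          * (C8 * C9 * z ^ C9 + gaussHyp C2 C9 (1 + C9) w₀)
        - C9 * z ^ C2 * (z - 1) ^ (-C2)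
          * (C8 * C9 * (C9 * z ^ (C9 - 1)) + g * -(1 / z ^ 2)))
        / (C8 * C9 * z ^ C9 + gaussHyp C2 C9 (1 + C9) w₀) ^ 2) z :=
    hN.div hD hden
  convert hF using 1
  have hzne : z ≠ 0 := hz0.ne'
  have hz1ne : z - 1 ≠ 0 := hz1.ne'
  have hgval : g = z * (C9 * (z ^ C2 * (z - 1) ^ (-C2)) - C9 * gaussHyp C2 C9 (1 + C9) w₀) := by
    rw [← hODEz, hw₀def]
    field_simp
  rw [hA1, hP1, hB1, hgval, show C3 = 1 - C9 by linarith]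
  have hden' : C9 * C8 * z ^ C9 + gaussHyp C2 C9 (1 + C9) w₀ ≠ 0 := by rwa [mul_comm C9 C8]
  field_simp
  ring
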